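/- arXiv:0710.4976 — 3 statements merged into one kernel-verified Lean document; each statement's English description precedes it below -/
import Mathlib

section
/- For every m ∈ ℕ, the Carlitz q-Bernoulli number satisfies β_{m,q} = Σ_{k=0}^m (−1)^k ([k]_q!/[k+1]_q) · S_q(m,k). (This is Theorem 1 of the paper, with the value of ∫ binom(x,k)_q dμ_q corrected to (−1)^k q^{k−C(k+1,2)}/[k+1]_q, which removes the stray factor q.) -/
/-- The q-analogue `[n]_q = (1 - q^n)/(1 - q)` of a natural number. -/
def qnum {K : Type*} [Field K] (q : K) (n : ℕ) : K := (1 - q ^ n) / (1 - q)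

/-- The q-factorial `[n]_q! = ∏_{j=1}^n [j]_q`. -/
def qfact {K : Type*} [Field K] (q : K) (n : ℕ) : K :=
  ∏ j ∈ Finset.range n, qnum q (j + 1)

/-- The Gaussian binomial coefficient, `0` for `k > n`. -/
def qbinom {K : Type*} [Field K] (q : K) (n k : ℕ) : K :=
  if k ≤ n then qfact q n / (qfact q k * qfact q (n - k)) else 0

/-- The q-Stirling number of the second kind
`S_q(n,k) = (q^{-C(k,2)}/[k]_q!) Σ_{j=0}^k (-1)^j q^{C(j,2)} binom(k,j)_q [k-j]_q^n`. -/
def qStirling2 {K : Type*} [Field K] (q : K) (n k : ℕ) : K :=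
  (q ^ Nat.choose k 2)⁻¹ / qfact q k *
    ∑ j ∈ Finset.range (k + 1),
      (-1 : K) ^ j * q ^ Nat.choose j 2 * qbinom q k j * (qnum q (k - j)) ^ n

section Basic
variable {K : Type*} [Field K] (q : K)

lemma hq1 (hq : ∀ n : ℕ, 1 ≤ n → q ^ n ≠ 1) : (1:K) - q ≠ 0 := by
  have := hq 1 le_rfl; simpa [sub_ne_zero] using fun h => this (by rw [pow_one, h])

lemma qnum_ne_zero (hq : ∀ n : ℕ, 1 ≤ n → q ^ n ≠ 1) {n : ℕ} (hn : 1 ≤ n) : qnum q n ≠ 0 := by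
  have h1 := hq1 q hq
  have h2 : (1:K) - q ^ n ≠ 0 := sub_ne_zero.2 fun h => hq n hn h.symm
  exact div_ne_zero h2 h1

lemma qfact_succ (n : ℕ) : qfact q (n+1) = qfact q n * qnum q (n+1) :=
  Finset.prod_range_succ _ _

lemma qfact_zero : qfact q 0 = 1 := rfl

lemma qnum_one (hq : ∀ n : ℕ, 1 ≤ n → q ^ n ≠ 1) : qnum q 1 = 1 := by
  have h1 := hq1 q hq
  simp [qnum, div_self h1]

lemma qfact_ne_zero (hq : ∀ n : ℕ, 1 ≤ n → q ^ n ≠ 1) (n : ℕ) : qfact q n ≠ 0 := by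
  induction n with
  | zero => simp [qfact_zero]
  | succ n ih => rw [qfact_succ]; exact mul_ne_zero ih (qnum_ne_zero q hq (Nat.le_add_left 1 n))

lemma qbinom_self (hq : ∀ n : ℕ, 1 ≤ n → q ^ n ≠ 1) (n : ℕ) : qbinom q n n = 1 := by
  rw [qbinom, if_pos le_rfl, Nat.sub_self, qfact_zero, mul_one,
    div_self (qfact_ne_zero q hq n)]

lemma qbinom_zero (hq : ∀ n : ℕ, 1 ≤ n → q ^ n ≠ 1) (n : ℕ) : qbinom q n 0 = 1 := by
  rw [qbinom, if_pos (Nat.zero_le n), qfact_zero, Nat.sub_zero, one_mul,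
    div_self (qfact_ne_zero q hq n)]

lemma qbinom_eq_zero {n k : ℕ} (h : n < k) : qbinom q n k = 0 := by
  rw [qbinom, if_neg (by omega)]

lemma qbinom_symm {n k : ℕ} (h : k ≤ n) : qbinom q n (n - k) = qbinom q n k := by
  rw [qbinom, qbinom, if_pos h, if_pos (Nat.sub_le n k), Nat.sub_sub_self h, mul_comm]

lemma qnum_pascal (hq : ∀ n : ℕ, 1 ≤ n → q ^ n ≠ 1) {n k : ℕ} (h : k ≤ n) :
    qnum q (n+1) = qnum q (k+1) + q^(k+1) * qnum q (n - k) := by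
  have h1 := hq1 q hq
  have hpow : q^(k+1) * q^(n-k) = q^(n+1) := by
    rw [← pow_add]; congr 1; omega
  rw [qnum, qnum, qnum]
  field_simp
  linear_combination hpow

lemma qbinom_pascal (hq : ∀ n : ℕ, 1 ≤ n → q ^ n ≠ 1) (n k : ℕ) :
    qbinom q (n+1) (k+1) = qbinom q n k + q^(k+1) * qbinom q n (k+1) := by
  rcases lt_or_ge n k with h|h
  · rw [qbinom_eq_zero q (by omega), qbinom_eq_zero q (by omega),
      qbinom_eq_zero q (by omega), mul_zero, add_zero]
  · by_cases hk : k = n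
    · subst hk
      rw [qbinom_self q hq, qbinom_self q hq, qbinom_eq_zero q (by omega), mul_zero, add_zero]
    · obtain ⟨d, rfl⟩ : ∃ d, n = k + d + 1 := ⟨n - k - 1, by omega⟩
      have hp := qnum_pascal q hq (n := k + d + 1) (k := k) (by omega)
      have e1 : k + d + 1 - k = d + 1 := by omega
      rw [e1] at hp
      rw [qbinom, qbinom, qbinom, if_pos (by omega), if_pos (by omega), if_pos (by omega)]
      have e2 : k + d + 1 + 1 - (k + 1) = d + 1 := by omega
      have e3 : k + d + 1 - k = d + 1 := by omega
      have e4 : k + d + 1 - (k + 1) = d := by omega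
      rw [e2, e3, e4]
      have e5 : k + d + 1 + 1 = (k + d + 1) + 1 := rfl
      rw [e5, qfact_succ, qfact_succ q k, qfact_succ q d, hp]
      have hfk := qfact_ne_zero q hq k
      have hfd := qfact_ne_zero q hq d
      have hfn := qfact_ne_zero q hq (k + d + 1)
      have hnk := qnum_ne_zero q hq (n := k + 1) (by omega)
      have hnd := qnum_ne_zero q hq (n := d + 1) (by omega)
      field_simp

lemma choose_two_succ (n : ℕ) : (n+1).choose 2 = n + n.choose 2 := by
  rw [Nat.choose_succ_succ, Nat.choose_one_right]

lemma two_choose_two (i : ℕ) : 2 * i.choose 2 + i = i * i := by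
  induction i with
  | zero => simp
  | succ m ih =>
    have hc := choose_two_succ m
    have hsq : (m+1)*(m+1) = m*m + 2*m + 1 := by ring
    omega

lemma choose_two_aux (i d : ℕ) : (i+d).choose 2 + i.choose 2 + i = d.choose 2 + (i+d)*i := by
  induction d with
  | zero =>
    have := two_choose_two i
    have h0 : Nat.choose 0 2 = 0 := rfl
    simp only [Nat.add_zero]
    omega
  | succ d ih =>
    have h1 : (i+(d+1)).choose 2 = (i+d) + (i+d).choose 2 := by
      rw [← choose_two_succ]; ring_nf
    have h2 : (d+1).choose 2 = d + d.choose 2 := choose_two_succ d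
    have h3 : (i+(d+1))*i = (i+d)*i + i := by ring
    omega

lemma gauss_identity (hq : ∀ n : ℕ, 1 ≤ n → q ^ n ≠ 1) (k : ℕ) : ∀ z : K,
    ∑ i ∈ Finset.range (k+1), qbinom q k i * q ^ (i.choose 2) * z ^ i
      = ∏ j ∈ Finset.range k, (1 + q ^ j * z) := by
  induction k with
  | zero => intro z; simp [qbinom, qfact]
  | succ k ih =>
    intro z
    rw [Finset.sum_range_succ' (fun i => qbinom q (k+1) i * q ^ (i.choose 2) * z ^ i) (k+1)]
    have h1 : ∀ i ∈ Finset.range (k+1),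
        qbinom q (k+1) (i+1) * q ^ ((i+1).choose 2) * z^(i+1)
        = z * (qbinom q k i * q ^ (i.choose 2) * (q*z)^i)
          + qbinom q k (i+1) * q ^ ((i+1).choose 2) * (q*z)^(i+1) := by
      intro i _
      rw [qbinom_pascal q hq]
      rw [choose_two_succ i, pow_add, mul_pow, mul_pow]
      ring
    rw [Finset.sum_congr rfl h1, Finset.sum_add_distrib, ← Finset.mul_sum, ih (q*z)]
    have h2 : ∑ i ∈ Finset.range (k+1), qbinom q k (i+1) * q ^ ((i+1).choose 2) * (q*z)^(i+1)
        = (∏ j ∈ Finset.range k, (1 + q^j*(q*z))) - 1 := by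
      have hs := Finset.sum_range_succ' (fun i => qbinom q k i * q ^ (i.choose 2) * (q*z)^i) (k+1)
      rw [Finset.sum_range_succ, ih (q*z), qbinom_eq_zero q (by omega)] at hs
      simp only [zero_mul, add_zero, pow_zero, mul_one, Nat.choose_zero_right] at hs
      rw [qbinom_zero q hq, one_mul] at hs
      have h0 : Nat.choose 0 2 = 0 := rfl
      rw [h0, pow_zero] at hs
      linear_combination -hs
    rw [h2, qbinom_zero q hq]
    have h3 : ∏ j ∈ Finset.range (k+1), (1 + q^j * z)
        = (∏ j ∈ Finset.range k, (1 + q^j*(q*z))) * (1 + z) := by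
      rw [Finset.prod_range_succ' (fun j => 1 + q^j * z) k]
      congr 1
      · exact Finset.prod_congr rfl fun j _ => by ring
      · simp
    rw [h3]
    have h0 : Nat.choose 0 2 = 0 := rfl
    rw [h0]
    simp only [pow_zero, mul_one, one_mul]
    ring

lemma inner_eval (hq0 : q ≠ 0) (hq : ∀ n : ℕ, 1 ≤ n → q ^ n ≠ 1) (k t : ℕ) :
    ∑ i ∈ Finset.range (k+1), (-1:K)^i * q^((k-i).choose 2) * q^(i*t) * qbinom q k i
      = q^(k.choose 2) * ∏ j ∈ Finset.range k, (1 - q^(t-j)) := by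
  have hg := gauss_identity q hq k (-(q^(t+1) * (q^k)⁻¹))
  have hsum : ∑ i ∈ Finset.range (k+1), (-1:K)^i * q^((k-i).choose 2) * q^(i*t) * qbinom q k i
      = q^(k.choose 2) * ∑ i ∈ Finset.range (k+1),
          qbinom q k i * q ^ (i.choose 2) * (-(q^(t+1) * (q^k)⁻¹)) ^ i := by
    rw [Finset.mul_sum]
    refine Finset.sum_congr rfl fun i hi => ?_
    have hik : i ≤ k := by simpa using Nat.lt_succ_iff.mp (Finset.mem_range.mp hi)
    have e : (-(q^(t+1) * (q^k)⁻¹))^i = (-1:K)^i * q^((t+1)*i) * (q^(k*i))⁻¹ := by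
      rw [neg_pow, mul_pow, inv_pow, ← pow_mul, ← pow_mul]
      ring
    have hca := choose_two_aux i (k - i)
    rw [Nat.add_sub_cancel' hik] at hca
    have hc : i*t = t*i := Nat.mul_comm i t
    have h4 : (t+1)*i = t*i+i := by ring
    have key : (k-i).choose 2 + i*t + k*i = k.choose 2 + i.choose 2 + (t+1)*i := by omega
    have hqp : q ^ ((k-i).choose 2) * q^(i*t) * q^(k*i) = q^(k.choose 2) * q^(i.choose 2) * q^((t+1)*i) := by
      rw [← pow_add, ← pow_add, ← pow_add, ← pow_add, key]
    rw [e]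
    have hz : q^(k*i) ≠ 0 := pow_ne_zero _ hq0
    have hinv : q^(k*i) * (q^(k*i))⁻¹ = 1 := mul_inv_cancel₀ hz
    linear_combination ((-1:K)^i * qbinom q k i * (q^(k*i))⁻¹) * hqp
      - ((-1:K)^i * q ^ ((k-i).choose 2) * q^(i*t) * qbinom q k i) * hinv
  rw [hsum, hg]
  congr 1
  rcases le_or_gt k t with h|h
  · rw [← Finset.prod_range_reflect (fun j => 1 - q^(t-j)) k]
    refine Finset.prod_congr rfl fun j hj => ?_
    have hjk : j < k := Finset.mem_range.mp hj
    have e1 : q^(j+(t+1)) = q^(t-(k-1-j)) * q^k := by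
      rw [← pow_add]; congr 1; omega
    have hz : q^k ≠ 0 := pow_ne_zero _ hq0
    rw [pow_add] at e1
    field_simp
    linear_combination -e1
  · rw [Finset.prod_eq_zero (Finset.mem_range.mpr (show k-t-1 < k by omega)),
        Finset.prod_eq_zero (Finset.mem_range.mpr (show t < k from h))]
    · simp
    · have e1 : q^(k-t-1) * q^(t+1) = q^k := by rw [← pow_add]; congr 1; omega
      have hz : q^k ≠ 0 := pow_ne_zero _ hq0
      field_simp
      linear_combination -e1

lemma P_fact (hq : ∀ n : ℕ, 1 ≤ n → q ^ n ≠ 1) {k t : ℕ} (hk : k ≤ t) :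
    ∏ j ∈ Finset.range k, (1 - q^(t-j)) = (1-q)^k * qfact q t / qfact q (t-k) := by
  induction k with
  | zero => simp [div_self (qfact_ne_zero q hq t)]
  | succ k ih =>
    rw [Finset.prod_range_succ, ih (by omega)]
    have e1 : t - k = (t - (k+1)) + 1 := by omega
    have h1 : (1 - q) * qnum q (t - k) = 1 - q^(t - k) := by
      rw [qnum, mul_div_cancel₀ _ (hq1 q hq)]
    have hfz := qfact_ne_zero q hq (t - (k + 1))
    have hnz : qnum q (t - k) ≠ 0 := qnum_ne_zero q hq (by omega)
    have hfe : qfact q (t - k) = qfact q (t - (k+1)) * qnum q (t - k) := by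
      rw [e1, qfact_succ, ← e1]
    rw [hfe]
    field_simp
    linear_combination (-(qfact q t * (1-q)^k)) * h1

lemma H_id (hq : ∀ n : ℕ, 1 ≤ n → q ^ n ≠ 1) (n : ℕ) :
    ∑ k ∈ Finset.range n, (1-q)^k * qfact q k * qbinom q n (k+1) = (n : K) := by
  induction n with
  | zero => simp
  | succ n ih =>
    have h1 : ∀ k ∈ Finset.range (n+1),
        (1-q)^k * qfact q k * qbinom q (n+1) (k+1)
        = (1-q)^k * qfact q k * qbinom q n k + (1-q)^k * qfact q k * (q^(k+1) * qbinom q n (k+1)) := by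
      intro k _
      rw [qbinom_pascal q hq]
      ring
    rw [Finset.sum_congr rfl h1, Finset.sum_add_distrib]
    have h2 : ∑ k ∈ Finset.range (n+1), (1-q)^k * qfact q k * qbinom q n k
        = 1 + ∑ k ∈ Finset.range n, (1-q)^(k+1) * qfact q (k+1) * qbinom q n (k+1) := by
      rw [Finset.sum_range_succ' (fun k => (1-q)^k * qfact q k * qbinom q n k) n]
      rw [qbinom_zero q hq]
      simp [qfact_zero, add_comm]
    have h3 : ∑ k ∈ Finset.range (n+1), (1-q)^k * qfact q k * (q^(k+1) * qbinom q n (k+1))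
        = ∑ k ∈ Finset.range n, (1-q)^k * qfact q k * (q^(k+1) * qbinom q n (k+1)) := by
      rw [Finset.sum_range_succ, qbinom_eq_zero q (by omega)]
      simp
    rw [h2, h3, add_assoc, ← Finset.sum_add_distrib]
    have h4 : ∀ k ∈ Finset.range n,
        (1-q)^(k+1) * qfact q (k+1) * qbinom q n (k+1)
          + (1-q)^k * qfact q k * (q^(k+1) * qbinom q n (k+1))
        = (1-q)^k * qfact q k * qbinom q n (k+1) := by
      intro k _
      rw [qfact_succ]
      have h5 : (1 - q) * qnum q (k + 1) = 1 - q^(k+1) := by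
        rw [qnum, mul_div_cancel₀ _ (hq1 q hq)]
      have : (1-q)^(k+1) * (qfact q k * qnum q (k+1)) = (1 - q^(k+1)) * ((1-q)^k * qfact q k) := by
        rw [pow_succ]
        linear_combination ((1-q)^k * qfact q k) * h5
      rw [this]
      ring
    rw [Finset.sum_congr rfl h4, ih]
    push_cast
    ring

lemma lemma6 (hq : ∀ n : ℕ, 1 ≤ n → q ^ n ≠ 1) {t m : ℕ} (htm : t ≤ m) :
    ∑ k ∈ Finset.range (m+1), (∏ j ∈ Finset.range k, (1 - q^(t-j))) / qnum q (k+1)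
      = ((t:K)+1) / qnum q (t+1) := by
  have hstep : ∑ k ∈ Finset.range (m+1), (∏ j ∈ Finset.range k, (1 - q^(t-j))) / qnum q (k+1)
      = ∑ k ∈ Finset.range (t+1), (∏ j ∈ Finset.range k, (1 - q^(t-j))) / qnum q (k+1) := by
    symm
    apply Finset.sum_subset (Finset.range_subset_range.mpr (by omega))
    intro k _ hk
    have htk : t < k := by simp only [Finset.mem_range] at hk; omega
    rw [Finset.prod_eq_zero (Finset.mem_range.mpr htk)]
    · simp
    · simp
  rw [hstep]
  have hterm : ∀ k ∈ Finset.range (t+1),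
      (∏ j ∈ Finset.range k, (1 - q^(t-j))) / qnum q (k+1)
      = ((1-q)^k * qfact q k * qbinom q (t+1) (k+1)) / qnum q (t+1) := by
    intro k hk
    have hkt : k ≤ t := by simp only [Finset.mem_range] at hk; omega
    rw [P_fact q hq hkt, qbinom, if_pos (by omega)]
    have e1 : t + 1 - (k+1) = t - k := by omega
    rw [e1, qfact_succ q t, qfact_succ q k]
    have h1 := qfact_ne_zero q hq t
    have h2 := qfact_ne_zero q hq k
    have h3 := qfact_ne_zero q hq (t-k)
    have h4 := qnum_ne_zero q hq (n := t+1) (by omega)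
    have h5 := qnum_ne_zero q hq (n := k+1) (by omega)
    field_simp
  rw [Finset.sum_congr rfl hterm, ← Finset.sum_div]
  have := H_id q hq (t+1)
  rw [this]
  push_cast
  ring

lemma alt_sum {k : ℕ} (hk : 1 ≤ k) :
    ∑ t ∈ Finset.range (k+1), (Nat.choose k t : K) * (-1)^t * ((t:K)+1)
      = if k = 1 then -1 else 0 := by
  obtain ⟨j, rfl⟩ : ∃ j, k = j+1 := ⟨k-1, by omega⟩
  have halt : ∀ n : ℕ, (∑ t ∈ Finset.range (n+1), (Nat.choose n t : K) * (-1)^t)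
      = if n = 0 then 1 else 0 := by
    intro n
    have h := Int.alternating_sum_range_choose (n := n)
    have h2 := congrArg (fun x : ℤ => (x : K)) h
    push_cast at h2
    rw [← h2]
    refine Finset.sum_congr rfl fun t _ => by ring
  have hsplit : ∑ t ∈ Finset.range (j+2), (Nat.choose (j+1) t : K) * (-1)^t * ((t:K)+1)
      = (∑ t ∈ Finset.range (j+2), (Nat.choose (j+1) t : K) * (-1)^t * (t:K))
        + ∑ t ∈ Finset.range (j+2), (Nat.choose (j+1) t : K) * (-1)^t := by
    rw [← Finset.sum_add_distrib]
    exact Finset.sum_congr rfl fun t _ => by ring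
  rw [hsplit, halt (j+1), if_neg (by omega)]
  have hfirst : ∑ t ∈ Finset.range (j+2), (Nat.choose (j+1) t : K) * (-1)^t * (t:K)
      = -((j:K)+1) * (if j = 0 then 1 else 0) := by
    rw [Finset.sum_range_succ' (fun t => (Nat.choose (j+1) t : K) * (-1)^t * (t:K)) (j+1)]
    push_cast
    have hterm : ∀ t ∈ Finset.range (j+1),
        (Nat.choose (j+1) (t+1) : K) * (-1)^(t+1) * ((t:K)+1)
        = -((j:K)+1) * ((Nat.choose j t : K) * (-1)^t) := by
      intro t _
      have hch := Nat.add_one_mul_choose_eq j t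
      have hch2 : ((j+1) * Nat.choose j t : K) = ((Nat.choose (j+1) (t+1)) * (t+1) : ℕ) := by
        exact_mod_cast congrArg (fun x : ℕ => (x : K)) hch
      push_cast at hch2
      rw [pow_succ]
      linear_combination (-1:K)^t * hch2
    rw [Finset.sum_congr rfl hterm, ← Finset.mul_sum, halt j]
    simp
  rw [hfirst]
  by_cases hj : j = 0
  · subst hj; norm_num
  · rw [if_neg hj, if_neg (by omega)]; ring

lemma binom_sum (hq : ∀ n : ℕ, 1 ≤ n → q ^ n ≠ 1) {t k : ℕ} (htk : t ≤ k) :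
    ∑ i ∈ Finset.range (k+1), (Nat.choose k i : K) * (Nat.choose i t : K) * (q^i * ((1-q)^i)⁻¹)
      = (Nat.choose k t : K) * q^t * ((1-q)^k)⁻¹ := by
  have h1 : ∑ i ∈ Finset.range (k+1), (Nat.choose k i : K) * (Nat.choose i t : K) * (q^i * ((1-q)^i)⁻¹)
      = ∑ i ∈ Finset.Ico t (k+1), (Nat.choose k i : K) * (Nat.choose i t : K) * (q^i * ((1-q)^i)⁻¹) := by
    symm
    apply Finset.sum_subset
    · intro i hi
      exact Finset.mem_range.mpr (Finset.mem_Ico.mp hi).2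
    · intro i hi hni
      have : i < t := by
        simp only [Finset.mem_range] at hi
        simp only [Finset.mem_Ico] at hni
        omega
      rw [Nat.choose_eq_zero_of_lt this]
      push_cast
      ring
  rw [h1, Finset.sum_Ico_eq_sum_range]
  have e : k + 1 - t = (k - t) + 1 := by omega
  rw [e]
  have hterm : ∀ j ∈ Finset.range ((k-t)+1),
      (Nat.choose k (t+j) : K) * (Nat.choose (t+j) t : K) * (q^(t+j) * ((1-q)^(t+j))⁻¹)
      = (Nat.choose k t : K) * (q^t * ((1-q)^t)⁻¹) * ((Nat.choose (k-t) j : K) * (q * (1-q)⁻¹)^j) := by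
    intro j hj
    have hjk : j ≤ k - t := by simp only [Finset.mem_range] at hj; omega
    have hcm := @Nat.choose_mul k (t + j) t (show t ≤ t + j by omega)
    rw [Nat.add_sub_cancel_left] at hcm
    have hcm2 : (Nat.choose k (t+j) : K) * (Nat.choose (t+j) t : K)
        = (Nat.choose k t : K) * (Nat.choose (k-t) j : K) := by exact_mod_cast congrArg (fun x : ℕ => (x : K)) hcm
    rw [hcm2, pow_add, pow_add, mul_inv, mul_pow, inv_pow]
    ring
  rw [Finset.sum_congr rfl hterm, ← Finset.mul_sum]
  have hx : ∑ j ∈ Finset.range ((k-t)+1), (Nat.choose (k-t) j : K) * (q * (1-q)⁻¹)^j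
      = ((1-q)^(k-t))⁻¹ := by
    have hap := add_pow (q * (1-q)⁻¹) 1 (k-t)
    simp only [one_pow, mul_one] at hap
    have hu : q * (1-q)⁻¹ + 1 = (1-q)⁻¹ := by
      field_simp [hq1 q hq]
      ring
    rw [hu, inv_pow] at hap
    rw [hap]
    exact Finset.sum_congr rfl fun j _ => by ring
  rw [hx]
  have : ((1-q)^t)⁻¹ * ((1-q)^(k-t))⁻¹ = ((1-q)^k)⁻¹ := by
    rw [← mul_inv, ← pow_add]
    congr 2
    omega
  calc (Nat.choose k t : K) * (q^t * ((1-q)^t)⁻¹) * ((1-q)^(k-t))⁻¹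
      = (Nat.choose k t : K) * q^t * (((1-q)^t)⁻¹ * ((1-q)^(k-t))⁻¹) := by ring
    _ = (Nat.choose k t : K) * q^t * ((1-q)^k)⁻¹ := by rw [this]

def carlitzF (m : ℕ) : K :=
  (∑ t ∈ Finset.range (m+1), (Nat.choose m t : K) * (-1)^t * (((t:K)+1) / qnum q (t+1))) / (1-q)^m

lemma carlitzF_zero (hq : ∀ n : ℕ, 1 ≤ n → q ^ n ≠ 1) : carlitzF q 0 = 1 := by
  rw [carlitzF]
  simp [qnum_one q hq]

lemma F_rec (hq : ∀ n : ℕ, 1 ≤ n → q ^ n ≠ 1) {k : ℕ} (hk : 1 ≤ k) :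
    q * (∑ i ∈ Finset.range (k+1), (Nat.choose k i : K) * q^i * carlitzF q i) - carlitzF q k
      = if k = 1 then 1 else 0 := by
  have hstep1 : ∀ i ∈ Finset.range (k+1),
      (Nat.choose k i : K) * q^i * carlitzF q i
      = ∑ t ∈ Finset.range (k+1),
          ((Nat.choose k i : K) * (Nat.choose i t : K) * (q^i * ((1-q)^i)⁻¹))
            * ((-1)^t * (((t:K)+1) / qnum q (t+1))) := by
    intro i hi
    have hik : i ≤ k := by simp only [Finset.mem_range] at hi; omega
    rw [carlitzF]
    have hext : ∑ t ∈ Finset.range (i+1), (Nat.choose i t : K) * (-1)^t * (((t:K)+1) / qnum q (t+1))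
        = ∑ t ∈ Finset.range (k+1), (Nat.choose i t : K) * (-1)^t * (((t:K)+1) / qnum q (t+1)) := by
      apply Finset.sum_subset (Finset.range_subset_range.mpr (by omega))
      intro t _ ht
      have : i < t := by simp only [Finset.mem_range] at ht; omega
      rw [Nat.choose_eq_zero_of_lt this]
      push_cast
      ring
    rw [hext, div_eq_mul_inv, Finset.sum_mul, Finset.mul_sum]
    exact Finset.sum_congr rfl fun t _ => by ring
  rw [Finset.sum_congr rfl hstep1, Finset.sum_comm]
  have hstep2 : ∀ t ∈ Finset.range (k+1),
      (∑ i ∈ Finset.range (k+1),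
        ((Nat.choose k i : K) * (Nat.choose i t : K) * (q^i * ((1-q)^i)⁻¹))
          * ((-1)^t * (((t:K)+1) / qnum q (t+1))))
      = ((Nat.choose k t : K) * q^t * ((1-q)^k)⁻¹) * ((-1)^t * (((t:K)+1) / qnum q (t+1))) := by
    intro t ht
    have htk : t ≤ k := by simp only [Finset.mem_range] at ht; omega
    rw [← Finset.sum_mul, binom_sum q hq htk]
  rw [Finset.sum_congr rfl hstep2]
  have hF : carlitzF q k
      = ∑ t ∈ Finset.range (k+1),
          ((Nat.choose k t : K) * ((1-q)^k)⁻¹) * ((-1)^t * (((t:K)+1) / qnum q (t+1))) := by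
    rw [carlitzF, div_eq_mul_inv, Finset.sum_mul]
    exact Finset.sum_congr rfl fun t _ => by ring
  rw [hF, Finset.mul_sum, ← Finset.sum_sub_distrib]
  have hstep3 : ∀ t ∈ Finset.range (k+1),
      q * ((Nat.choose k t : K) * q^t * ((1-q)^k)⁻¹ * ((-1)^t * (((t:K)+1) / qnum q (t+1))))
        - (Nat.choose k t : K) * ((1-q)^k)⁻¹ * ((-1)^t * (((t:K)+1) / qnum q (t+1)))
      = (-(1-q) * ((1-q)^k)⁻¹) * ((Nat.choose k t : K) * (-1)^t * ((t:K)+1)) := by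
    intro t _
    have hnz := qnum_ne_zero q hq (n := t+1) (by omega)
    have hq1' : (1 - q) * qnum q (t+1) = 1 - q^(t+1) := by
      rw [qnum, mul_div_cancel₀ _ (hq1 q hq)]
    have hdiv : (q^(t+1) - 1) / qnum q (t+1) = -(1-q) := by
      rw [div_eq_iff hnz]
      linear_combination hq1'
    have expand : q * ((Nat.choose k t : K) * q^t * ((1-q)^k)⁻¹ * ((-1)^t * (((t:K)+1) / qnum q (t+1))))
        - (Nat.choose k t : K) * ((1-q)^k)⁻¹ * ((-1)^t * (((t:K)+1) / qnum q (t+1)))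
        = ((Nat.choose k t : K) * (-1)^t * ((t:K)+1) * ((1-q)^k)⁻¹) * ((q^(t+1) - 1)/qnum q (t+1)) := by
      ring
    rw [expand, hdiv]
    ring
  rw [Finset.sum_congr rfl hstep3, ← Finset.mul_sum, alt_sum hk]
  by_cases hk1 : k = 1
  · subst hk1
    have h1q := hq1 q hq
    rw [if_pos rfl, if_pos rfl, pow_one]
    field_simp
  · rw [if_neg hk1, if_neg hk1]
    ring

lemma reflect_T (hq : ∀ n : ℕ, 1 ≤ n → q ^ n ≠ 1) (k m : ℕ) :
    (-1:K)^k * (∑ j ∈ Finset.range (k+1),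
        (-1:K)^j * q^(j.choose 2) * qbinom q k j * qnum q (k-j) ^ m)
      = ∑ j ∈ Finset.range (k+1), (-1:K)^j * q^((k-j).choose 2) * qbinom q k j * qnum q j ^ m := by
  rw [← Finset.sum_range_reflect
    (fun j => (-1:K)^j * q^(j.choose 2) * qbinom q k j * qnum q (k-j) ^ m) (k+1)]
  rw [Finset.mul_sum]
  refine Finset.sum_congr rfl fun j hj => ?_
  have hjk : j ≤ k := by simp only [Finset.mem_range] at hj; omega
  have e0 : k + 1 - 1 - j = k - j := by omega
  have e1 : k - (k - j) = j := by omega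
  rw [e0, e1, qbinom_symm q hjk]
  have hsq : ((-1:K)^(k-j))^2 = 1 := by
    rw [← pow_mul, Nat.mul_comm, pow_mul]
    norm_num
  have hsgn : (-1:K)^(k-j) * (-1:K)^j = (-1:K)^k := by
    rw [← pow_add]
    congr 1
    omega
  have hsgn2 : (-1:K)^k * (-1:K)^(k-j) = (-1:K)^j := by
    calc (-1:K)^k * (-1:K)^(k-j) = ((-1:K)^(k-j) * (-1:K)^j) * (-1:K)^(k-j) := by rw [hsgn]
      _ = (-1:K)^j * ((-1:K)^(k-j))^2 := by ring
      _ = (-1:K)^j := by rw [hsq]; ring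
  linear_combination (q^((k-j).choose 2) * qbinom q k j * qnum q j ^ m) * hsgn2

lemma expand_qnum_pow (j m : ℕ) :
    qnum q j ^ m
      = (∑ t ∈ Finset.range (m+1), (Nat.choose m t : K) * (-1)^t * q^(j*t)) / (1-q)^m := by
  rw [qnum, div_pow]
  congr 1
  have h : (1:K) - q^j = -(q^j) + 1 := by ring
  rw [h, add_pow]
  refine Finset.sum_congr rfl fun t _ => ?_
  rw [neg_pow, ← pow_mul, Nat.mul_comm j t]
  ring

lemma rhs_eq (hq0 : q ≠ 0) (hq : ∀ n : ℕ, 1 ≤ n → q ^ n ≠ 1) (m : ℕ) :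
    ∑ k ∈ Finset.range (m+1), (-1:K)^k * (qfact q k / qnum q (k+1)) *
        ((q ^ Nat.choose k 2)⁻¹ / qfact q k *
          ∑ j ∈ Finset.range (k + 1),
            (-1 : K) ^ j * q ^ Nat.choose j 2 * qbinom q k j * (qnum q (k - j)) ^ m)
      = carlitzF q m := by
  have hstep : ∀ k ∈ Finset.range (m+1),
      (-1:K)^k * (qfact q k / qnum q (k+1)) *
        ((q ^ Nat.choose k 2)⁻¹ / qfact q k *
          ∑ j ∈ Finset.range (k + 1),
            (-1 : K) ^ j * q ^ Nat.choose j 2 * qbinom q k j * (qnum q (k - j)) ^ m)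
      = ∑ t ∈ Finset.range (m+1),
          ((Nat.choose m t : K) * (-1)^t * ((1-q)^m)⁻¹)
            * ((∏ i ∈ Finset.range k, (1 - q^(t-i))) / qnum q (k+1)) := by
    intro k _
    have hfk := qfact_ne_zero q hq k
    have hnk := qnum_ne_zero q hq (n := k+1) (by omega)
    have hqc : (q:K) ^ Nat.choose k 2 ≠ 0 := pow_ne_zero _ hq0
    have h1 : (-1:K)^k * (qfact q k / qnum q (k+1)) *
        ((q ^ Nat.choose k 2)⁻¹ / qfact q k *
          ∑ j ∈ Finset.range (k + 1),
            (-1 : K) ^ j * q ^ Nat.choose j 2 * qbinom q k j * (qnum q (k - j)) ^ m)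
        = (q ^ Nat.choose k 2)⁻¹ * (qnum q (k+1))⁻¹ *
            ((-1:K)^k * ∑ j ∈ Finset.range (k + 1),
              (-1 : K) ^ j * q ^ Nat.choose j 2 * qbinom q k j * (qnum q (k - j)) ^ m) := by
      field_simp
    rw [h1, reflect_T q hq k m]
    have h2 : ∀ j ∈ Finset.range (k+1),
        (-1:K)^j * q^((k-j).choose 2) * qbinom q k j * qnum q j ^ m
        = ∑ t ∈ Finset.range (m+1),
            ((Nat.choose m t : K) * (-1)^t * ((1-q)^m)⁻¹)
              * ((-1:K)^j * q^((k-j).choose 2) * q^(j*t) * qbinom q k j) := by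
      intro j _
      rw [expand_qnum_pow q j m, div_eq_mul_inv, Finset.sum_mul, Finset.mul_sum]
      refine Finset.sum_congr rfl fun t _ => by ring
    rw [Finset.sum_congr rfl h2, Finset.sum_comm, Finset.mul_sum]
    refine Finset.sum_congr rfl fun t _ => ?_
    rw [← Finset.mul_sum, inner_eval q hq0 hq k t]
    rw [div_eq_mul_inv]
    have hinv : ((q:K) ^ Nat.choose k 2)⁻¹ * q ^ Nat.choose k 2 = 1 := inv_mul_cancel₀ hqc
    linear_combination ((Nat.choose m t : K) * (-1)^t * ((1-q)^m)⁻¹ *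
      (∏ i ∈ Finset.range k, (1 - q^(t-i))) * (qnum q (k+1))⁻¹) * hinv
  rw [Finset.sum_congr rfl hstep, Finset.sum_comm]
  rw [carlitzF, div_eq_mul_inv, Finset.sum_mul]
  refine Finset.sum_congr rfl fun t ht => ?_
  have htm : t ≤ m := by simp only [Finset.mem_range] at ht; omega
  rw [← Finset.mul_sum, lemma6 q hq htm]
  rw [div_eq_mul_inv]
  ring

end Basic

/-- **Theorem 1** (corrected): the Carlitz q-Bernoulli numbers, determined by
`β_0 = 1` and `q(qβ+1)^k - β_k = δ_{1,k}`, satisfy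
`β_m = Σ_{k=0}^m (-1)^k ([k]_q!/[k+1]_q) S_q(m,k)`. -/
theorem carlitz_qBernoulli_eq_sum_qStirling2
    {K : Type*} [Field K] [CharZero K] (q : K) (hq0 : q ≠ 0)
    (hq : ∀ n : ℕ, 1 ≤ n → q ^ n ≠ 1)
    (β : ℕ → K) (hβ0 : β 0 = 1)
    (hβ : ∀ k : ℕ, 1 ≤ k →
      q * ∑ i ∈ Finset.range (k + 1), (Nat.choose k i : K) * q ^ i * β i - β k =
        if k = 1 then 1 else 0)
    (m : ℕ) :
    β m = ∑ k ∈ Finset.range (m + 1),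
      (-1 : K) ^ k * (qfact q k / qnum q (k + 1)) * qStirling2 q m k := by
  have hmain : ∀ m, β m = carlitzF q m := by
    intro n
    induction n using Nat.strong_induction_on with
    | _ n ih =>
      match n with
      | 0 => rw [hβ0, carlitzF_zero q hq]
      | (n+1) =>
        have h1 := hβ (n+1) (by omega)
        have h2 := F_rec q hq (k := n+1) (by omega)
        rw [Finset.sum_range_succ] at h1 h2
        simp only [Nat.choose_self, Nat.cast_one, one_mul] at h1 h2
        have hsum : ∑ i ∈ Finset.range (n+1), (Nat.choose (n+1) i : K) * q^i * β i
            = ∑ i ∈ Finset.range (n+1), (Nat.choose (n+1) i : K) * q^i * carlitzF q i := by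
          refine Finset.sum_congr rfl fun i hi => ?_
          rw [ih i (Finset.mem_range.mp hi)]
        have key : (q * q^(n+1) - 1) * (β (n+1) - carlitzF q (n+1)) = 0 := by
          linear_combination h1 - h2 - q * hsum
        have hne : q * q^(n+1) - 1 ≠ 0 := by
          intro h
          apply hq (n+2) (by omega)
          have h' : q * q^(n+1) = 1 := by linear_combination h
          rw [← h']
          ring
        rcases mul_eq_zero.mp key with h|h
        · exact absurd h hne
        · exact sub_eq_zero.mp h
  have hrhs := rhs_eq q hq0 hq m
  simp only [qStirling2]
  rw [hmain m]
  exact hrhs.symm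
end

section
/- For all n, t ∈ ℕ one has q^{n·t} = Σ_{k=0}^n (q−1)^k q^{C(k,2)} binom(n,k)_q [t]_{k,q}, where [t]_{k,q} = ∏_{i=0}^{k−1} [t−i]_q is the k-th order q-factorial of t (with [m]_q = (1 − q^m)/(1 − q) for m ∈ ℤ, using that q is invertible; in particular [t]_{k,q} = 0 when k > t). (First equality of Equation (19).) -/
/-- The q-analogue `[m]_q = (1 - q^m)/(1 - q)` of an integer `m` (using `zpow`,
meaningful since `q` is invertible). -/
def qznum {K : Type*} [Field K] (q : K) (m : ℤ) : K := (1 - q ^ m) / (1 - q)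

section Aux
variable {K : Type*} [Field K] (q : K) (hq : ∀ n : ℕ, 1 ≤ n → q ^ n ≠ 1)

include hq

lemma my_hd : (1 : K) - q ≠ 0 := by
  have := hq 1 le_rfl
  simp only [pow_one] at this
  exact sub_ne_zero.mpr fun h => this h.symm

lemma my_qnum_ne_zero (j : ℕ) : qnum q (j + 1) ≠ 0 :=
  div_ne_zero (sub_ne_zero.mpr fun h => hq (j + 1) (by omega) h.symm) (my_hd q hq)

omit hq in
lemma my_qfact_succ (m : ℕ) : qfact q (m + 1) = qfact q m * qnum q (m + 1) := by
  rw [qfact, qfact, Finset.prod_range_succ]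

lemma my_qfact_ne_zero (m : ℕ) : qfact q m ≠ 0 := by
  exact Finset.prod_ne_zero_iff.mpr fun j _ => my_qnum_ne_zero q hq j

lemma my_pascal (n k : ℕ) (hk : k ≤ n) :
    qbinom q (n + 1) (k + 1) = qbinom q n k + q ^ (k + 1) * qbinom q n (k + 1) := by
  rcases eq_or_lt_of_le hk with rfl | hlt
  · have h1 : ¬ (k + 1 ≤ k) := by omega
    simp only [qbinom, if_pos (le_refl (k+1)), if_pos (le_refl k), if_neg h1,
      Nat.sub_self]
    have h0 : qfact q 0 = 1 := by simp [qfact]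
    rw [h0, mul_zero, add_zero, mul_one, mul_one, div_self (my_qfact_ne_zero q hq _),
      div_self (my_qfact_ne_zero q hq _)]
  · have hk1 : k + 1 ≤ n := hlt
    have hnum : qnum q (n + 1) = qnum q (k + 1) + q ^ (k + 1) * qnum q (n - k) := by
      unfold qnum
      have hpow : q ^ (k + 1) * q ^ (n - k) = q ^ (n + 1) := by
        rw [← pow_add]; congr 1; omega
      rw [← mul_div_assoc, ← add_div]
      congr 1
      linear_combination hpow
    have hs1 : (n + 1) - (k + 1) = n - k := by omega
    have hs2 : n - k = (n - (k + 1)) + 1 := by omega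
    simp only [qbinom, if_pos (by omega : k + 1 ≤ n + 1), if_pos hk, if_pos hk1, hs1]
    rw [my_qfact_succ q n, my_qfact_succ q k, hs2, my_qfact_succ q (n - (k + 1)), hnum, ← hs2]
    have h1 := my_qfact_ne_zero q hq n
    have h2 := my_qfact_ne_zero q hq k
    have h3 := my_qfact_ne_zero q hq (n - (k + 1))
    have h4 := my_qnum_ne_zero q hq k
    have h5 : qnum q (n - k) ≠ 0 := by rw [hs2]; exact my_qnum_ne_zero q hq _
    field_simp


lemma my_qbinom_zero (n : ℕ) : qbinom q n 0 = 1 := by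
  have h0 : qfact q 0 = 1 := by simp [qfact]
  simp only [qbinom, if_pos (Nat.zero_le n), h0, Nat.sub_zero, one_mul]
  exact div_self (my_qfact_ne_zero q hq n)

lemma my_key (x : K) (n : ℕ) :
    x ^ n = ∑ k ∈ Finset.range (n + 1),
      qbinom q n k * ∏ i ∈ Finset.range k, (x - q ^ i) := by
  induction n with
  | zero => simp [my_qbinom_zero q hq]
  | succ n ih =>
    have hzero : qbinom q n (n + 1) = 0 := if_neg (by omega)
    calc x ^ (n + 1) = x * x ^ n := by ring
    _ = ∑ k ∈ Finset.range (n + 1),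
          (qbinom q n k * ∏ i ∈ Finset.range (k + 1), (x - q ^ i)
            + q ^ k * qbinom q n k * ∏ i ∈ Finset.range k, (x - q ^ i)) := by
        rw [ih, Finset.mul_sum]
        refine Finset.sum_congr rfl fun k _ => ?_
        rw [Finset.prod_range_succ]
        ring
    _ = (∑ k ∈ Finset.range (n + 1),
          qbinom q n k * ∏ i ∈ Finset.range (k + 1), (x - q ^ i))
        + ∑ k ∈ Finset.range (n + 1),
          q ^ k * qbinom q n k * ∏ i ∈ Finset.range k, (x - q ^ i) :=
        Finset.sum_add_distrib
    _ = (∑ k ∈ Finset.range (n + 1),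
          qbinom q n k * ∏ i ∈ Finset.range (k + 1), (x - q ^ i))
        + ((∑ k ∈ Finset.range (n + 1),
          q ^ (k + 1) * qbinom q n (k + 1) * ∏ i ∈ Finset.range (k + 1), (x - q ^ i)) + 1) := by
        congr 1
        rw [Finset.sum_range_succ' (fun k => q ^ k * qbinom q n k * ∏ i ∈ Finset.range k, (x - q ^ i)) n]
        rw [Finset.sum_range_succ (fun k => q ^ (k + 1) * qbinom q n (k + 1) * ∏ i ∈ Finset.range (k + 1), (x - q ^ i)) n]
        simp [hzero, my_qbinom_zero q hq]
    _ = (∑ k ∈ Finset.range (n + 1),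
          qbinom q (n + 1) (k + 1) * ∏ i ∈ Finset.range (k + 1), (x - q ^ i)) + 1 := by
        rw [← add_assoc, ← Finset.sum_add_distrib]
        congr 1
        refine Finset.sum_congr rfl fun k hk => ?_
        rw [my_pascal q hq n k (by simpa using Nat.lt_succ_iff.mp (Finset.mem_range.mp hk))]
        ring
    _ = ∑ k ∈ Finset.range (n + 2),
          qbinom q (n + 1) k * ∏ i ∈ Finset.range k, (x - q ^ i) := by
        rw [Finset.sum_range_succ' (fun k => qbinom q (n + 1) k * ∏ i ∈ Finset.range k, (x - q ^ i)) (n + 1)]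
        simp [my_qbinom_zero q hq]

end Aux

/-- **First equality of Equation (19)**:
`q^{nt} = Σ_{k=0}^n (q-1)^k q^{C(k,2)} binom(n,k)_q [t]_{k,q}`, where
`[t]_{k,q} = ∏_{i=0}^{k-1} [t-i]_q` is the k-th order q-factorial of `t`. -/
theorem q_pow_mul_eq_sum_qfactorial
    {K : Type*} [Field K] [CharZero K] (q : K) (hq0 : q ≠ 0)
    (hq : ∀ n : ℕ, 1 ≤ n → q ^ n ≠ 1) (n t : ℕ) :
    q ^ (n * t) = ∑ k ∈ Finset.range (n + 1),
      (q - 1) ^ k * q ^ Nat.choose k 2 * qbinom q n k *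
        ∏ i ∈ Finset.range k, qznum q ((t : ℤ) - (i : ℤ)) := by
  have hpow : q ^ (n * t) = (q ^ t) ^ n := by rw [mul_comm, pow_mul]
  rw [hpow, my_key q hq (q ^ t) n]
  refine Finset.sum_congr rfl fun k _ => ?_
  have hprod : ∏ i ∈ Finset.range k, (q ^ t - q ^ i)
      = ∏ i ∈ Finset.range k, ((q - 1) * q ^ i * qznum q ((t : ℤ) - (i : ℤ))) := by
    refine Finset.prod_congr rfl fun i _ => ?_
    have hz : (q : K) ^ ((t : ℤ) - (i : ℤ)) = q ^ t / q ^ i := by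
      rw [zpow_sub₀ hq0, zpow_natCast, zpow_natCast]
    rw [qznum, hz]
    have hqi : (q : K) ^ i ≠ 0 := pow_ne_zero _ hq0
    have hd := my_hd q hq
    field_simp
    ring
  rw [hprod, Finset.prod_mul_distrib, Finset.prod_mul_distrib, Finset.prod_const,
    Finset.card_range, Finset.prod_pow_eq_pow_sum]
  have hsum : ∑ i ∈ Finset.range k, i = Nat.choose k 2 := by
    rw [Finset.sum_range_id, Nat.choose_two_right]
  rw [hsum]
  ring
end

section
/- For all k ≥ 1 and n, x ∈ ℕ, the k-fold multivariate q-Volkenborn (Riemann) sums converge: in ℚ_p, lim_{N→∞} (1/[p^N]_q^k) Σ_{x_1=0}^{p^N−1} ⋯ Σ_{x_k=0}^{p^N−1} [x_1+⋯+x_k+x]_q^n · q^{x_1+⋯+x_k} · q^{Σ_{l=1}^k (k−l) x_l} = (1/(1−q)^n) Σ_{i=0}^n (−1)^i C(n,i) q^{i·x} ∏_{j=1}^k (i+j)/[i+j]_q. (This is the evaluation (25) ⇒ (26) of the multivariate p-adic q-integral defining the higher-order q-Bernoulli polynomial β^{(k)}_{n,q}(x).) -/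
variable {p : ℕ} [hp : Fact p.Prime]

private lemma nat_bernoulli (a v : ℕ) : 1 + v * a ≤ (1 + a) ^ v := by
  induction v with
  | zero => simp
  | succ v ih =>
    calc 1 + (v + 1) * a = (1 + v * a) * 1 + a := by ring
      _ ≤ (1 + a) ^ v * (1 + a) := by nlinarith [Nat.one_le_pow v (1 + a) (by omega)]
      _ = (1 + a) ^ (v + 1) := (pow_succ _ _).symm

private lemma padic_sum_norm_le {ι : Type*} (s : Finset ι) (f : ι → ℚ_[p]) (c : ℝ)
    (hc : 0 ≤ c) (h : ∀ i ∈ s, ‖f i‖ ≤ c) : ‖∑ i ∈ s, f i‖ ≤ c := by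
  induction s using Finset.cons_induction with
  | empty => simpa using hc
  | cons a s ha ih =>
    rw [Finset.sum_cons]
    refine le_trans (Padic.nonarchimedean _ _) (max_le (h a (by simp)) ?_)
    exact ih fun i hi => h i (by simp [hi])

private lemma padic_sum_norm_lt {ι : Type*} (s : Finset ι) (f : ι → ℚ_[p]) (c : ℝ)
    (hc : 0 < c) (h : ∀ i ∈ s, ‖f i‖ < c) : ‖∑ i ∈ s, f i‖ < c := by
  induction s using Finset.cons_induction with
  | empty => simpa using hc
  | cons a s ha ih =>
    rw [Finset.sum_cons]
    refine lt_of_le_of_lt (Padic.nonarchimedean _ _) (max_lt (h a (by simp)) ?_)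
    exact ih fun i hi => h i (by simp [hi])

private lemma norm_pow_lt_norm_natCast (t : ℚ_[p])
    (ht : ‖t‖ < (p : ℝ) ^ (-(1 : ℝ) / ((p : ℝ) - 1))) {j : ℕ} (hj : 1 ≤ j) :
    ‖t‖ ^ j < ‖((j + 1 : ℕ) : ℚ_[p])‖ := by
  have hp1 : (1 : ℝ) < (p : ℕ) := by exact_mod_cast hp.out.one_lt
  have hp0 : (0 : ℝ) < (p : ℕ) := lt_trans one_pos hp1
  set v : ℕ := padicValNat p (j + 1) with hv
  -- the norm of j+1
  have hne : ((j + 1 : ℕ) : ℚ_[p]) ≠ 0 := Nat.cast_ne_zero.mpr (Nat.succ_ne_zero j)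
  have hnorm : ‖((j + 1 : ℕ) : ℚ_[p])‖ = (p : ℝ) ^ (-(v : ℤ)) := by
    rw [Padic.norm_eq_zpow_neg_valuation hne, Padic.valuation_natCast]
  rw [hnorm]
  -- nat inequality v * (p - 1) ≤ j
  have hdvd : p ^ v ≤ j + 1 :=
    Nat.le_of_dvd (Nat.succ_pos j) pow_padicValNat_dvd
  have hb : 1 + v * (p - 1) ≤ p ^ v := by
    have := nat_bernoulli (p - 1) v
    have hpeq : 1 + (p - 1) = p := by have := hp.out.two_le; omega
    rwa [hpeq] at this
  have hnat : v * (p - 1) ≤ j := by omega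
  have hcast : (v : ℝ) * ((p : ℝ) - 1) ≤ (j : ℝ) := by
    have h2 : (2 : ℕ) ≤ p := hp.out.two_le
    calc (v : ℝ) * ((p : ℝ) - 1) = ((v * (p - 1) : ℕ) : ℝ) := by
          push_cast [Nat.cast_sub (le_of_lt hp.out.one_lt)]; ring
      _ ≤ (j : ℝ) := by exact_mod_cast hnat
  -- rpow manipulation
  have hrz : ((p : ℝ) ^ (-(v : ℤ)) : ℝ) = (p : ℝ) ^ ((-(v : ℤ) : ℤ) : ℝ) :=
    (Real.rpow_intCast _ _).symm
  rw [hrz]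
  rcases eq_or_lt_of_le (norm_nonneg t) with h0 | h0
  · calc ‖t‖ ^ j = 0 := by rw [← h0]; exact zero_pow (by omega)
      _ < _ := Real.rpow_pos_of_pos hp0 _
  · calc ‖t‖ ^ j < ((p : ℝ) ^ (-(1 : ℝ) / ((p : ℝ) - 1))) ^ j :=
        pow_lt_pow_left₀ ht (norm_nonneg t) (by omega)
      _ = (p : ℝ) ^ ((-(1 : ℝ) / ((p : ℝ) - 1)) * j) := by
        rw [← Real.rpow_natCast ((p : ℝ) ^ (-(1 : ℝ) / ((p : ℝ) - 1))) j,
          ← Real.rpow_mul (le_of_lt hp0)]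
      _ ≤ (p : ℝ) ^ ((-(v : ℤ) : ℤ) : ℝ) := by
        apply Real.rpow_le_rpow_left_iff hp1 |>.mpr
        have hp1' : (0 : ℝ) < (p : ℝ) - 1 := by linarith
        push_cast
        rw [div_mul_eq_mul_div, div_le_iff₀ hp1']
        nlinarith

private lemma norm_pow_le_norm_natCast (t : ℚ_[p])
    (ht : ‖t‖ < (p : ℝ) ^ (-(1 : ℝ) / ((p : ℝ) - 1))) (j : ℕ) :
    ‖t‖ ^ j ≤ ‖((j + 1 : ℕ) : ℚ_[p])‖ := by
  rcases Nat.eq_zero_or_pos j with rfl | hj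
  · simp
  · exact le_of_lt (norm_pow_lt_norm_natCast t ht hj)

private lemma term_norm_le (t : ℚ_[p])
    (ht : ‖t‖ < (p : ℝ) ^ (-(1 : ℝ) / ((p : ℝ) - 1))) (m' j' : ℕ) :
    ‖((Nat.choose (m' + 1) (j' + 1) : ℕ) : ℚ_[p]) * t ^ (j' + 1)‖ ≤
      ‖((m' + 1 : ℕ) : ℚ_[p])‖ * ‖t‖ := by
  have hid : (m' + 1) * Nat.choose m' j' = Nat.choose (m' + 1) (j' + 1) * (j' + 1) :=
    Nat.add_one_mul_choose_eq m' j'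
  have hidc : ((m' + 1 : ℕ) : ℚ_[p]) * ((Nat.choose m' j' : ℕ) : ℚ_[p]) =
      ((Nat.choose (m' + 1) (j' + 1) : ℕ) : ℚ_[p]) * ((j' + 1 : ℕ) : ℚ_[p]) := by
    exact_mod_cast congrArg (fun z : ℕ => (z : ℚ_[p])) hid
  have hAB : ‖((Nat.choose (m' + 1) (j' + 1) : ℕ) : ℚ_[p])‖ * ‖((j' + 1 : ℕ) : ℚ_[p])‖ =
      ‖((m' + 1 : ℕ) : ℚ_[p])‖ * ‖((Nat.choose m' j' : ℕ) : ℚ_[p])‖ := by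
    rw [← norm_mul, ← norm_mul, ← hidc]
  have hC1 : ‖((Nat.choose m' j' : ℕ) : ℚ_[p])‖ ≤ 1 := by
    have := Padic.norm_int_le_one (p := p) (Nat.choose m' j' : ℤ)
    simpa using this
  have hB0 : 0 < ‖((j' + 1 : ℕ) : ℚ_[p])‖ :=
    norm_pos_iff.mpr (Nat.cast_ne_zero.mpr (Nat.succ_ne_zero j'))
  have hT : ‖t‖ ^ j' ≤ ‖((j' + 1 : ℕ) : ℚ_[p])‖ := norm_pow_le_norm_natCast t ht j'
  have hA0 : (0:ℝ) ≤ ‖((Nat.choose (m' + 1) (j' + 1) : ℕ) : ℚ_[p])‖ := norm_nonneg _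
  have hM0 : (0:ℝ) ≤ ‖((m' + 1 : ℕ) : ℚ_[p])‖ := norm_nonneg _
  rw [norm_mul, norm_pow, pow_succ, ← mul_assoc]
  have h1 : ‖((Nat.choose (m' + 1) (j' + 1) : ℕ) : ℚ_[p])‖ * ‖t‖ ^ j' ≤
      ‖((m' + 1 : ℕ) : ℚ_[p])‖ := by nlinarith
  exact mul_le_mul_of_nonneg_right h1 (norm_nonneg t)

private lemma term_norm_lt (t : ℚ_[p])
    (ht : ‖t‖ < (p : ℝ) ^ (-(1 : ℝ) / ((p : ℝ) - 1))) (ht0 : t ≠ 0)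
    (m' j' : ℕ) (hj' : 1 ≤ j') :
    ‖((Nat.choose (m' + 1) (j' + 1) : ℕ) : ℚ_[p]) * t ^ (j' + 1)‖ <
      ‖((m' + 1 : ℕ) : ℚ_[p])‖ * ‖t‖ := by
  have hM0 : (0:ℝ) < ‖((m' + 1 : ℕ) : ℚ_[p])‖ :=
    norm_pos_iff.mpr (Nat.cast_ne_zero.mpr (Nat.succ_ne_zero m'))
  have hT0 : (0:ℝ) < ‖t‖ := norm_pos_iff.mpr ht0
  rcases eq_or_lt_of_le (norm_nonneg ((Nat.choose (m' + 1) (j' + 1) : ℕ) : ℚ_[p]))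
    with hA | hA
  · rw [norm_mul, ← hA, zero_mul]
    positivity
  · have hid : (m' + 1) * Nat.choose m' j' = Nat.choose (m' + 1) (j' + 1) * (j' + 1) :=
      Nat.add_one_mul_choose_eq m' j'
    have hidc : ((m' + 1 : ℕ) : ℚ_[p]) * ((Nat.choose m' j' : ℕ) : ℚ_[p]) =
        ((Nat.choose (m' + 1) (j' + 1) : ℕ) : ℚ_[p]) * ((j' + 1 : ℕ) : ℚ_[p]) := by
      exact_mod_cast congrArg (fun z : ℕ => (z : ℚ_[p])) hid
    have hAB : ‖((Nat.choose (m' + 1) (j' + 1) : ℕ) : ℚ_[p])‖ * ‖((j' + 1 : ℕ) : ℚ_[p])‖ =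
        ‖((m' + 1 : ℕ) : ℚ_[p])‖ * ‖((Nat.choose m' j' : ℕ) : ℚ_[p])‖ := by
      rw [← norm_mul, ← norm_mul, ← hidc]
    have hC1 : ‖((Nat.choose m' j' : ℕ) : ℚ_[p])‖ ≤ 1 := by
      have := Padic.norm_int_le_one (p := p) (Nat.choose m' j' : ℤ)
      simpa using this
    have hB0 : 0 < ‖((j' + 1 : ℕ) : ℚ_[p])‖ :=
      norm_pos_iff.mpr (Nat.cast_ne_zero.mpr (Nat.succ_ne_zero j'))
    have hT : ‖t‖ ^ j' < ‖((j' + 1 : ℕ) : ℚ_[p])‖ := norm_pow_lt_norm_natCast t ht hj'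
    rw [norm_mul, norm_pow, pow_succ, ← mul_assoc]
    have h1 : ‖((Nat.choose (m' + 1) (j' + 1) : ℕ) : ℚ_[p])‖ * ‖t‖ ^ j' <
        ‖((m' + 1 : ℕ) : ℚ_[p])‖ := by nlinarith
    exact mul_lt_mul_of_pos_right h1 hT0

private lemma expand_pow_sub_one (t : ℚ_[p]) (m : ℕ) :
    (1 + t) ^ m - 1 = ∑ j ∈ Finset.Ico 1 (m + 1), ((Nat.choose m j : ℕ) : ℚ_[p]) * t ^ j := by
  have h := add_pow t 1 m
  have h2 : (1 + t) ^ m = ∑ j ∈ Finset.range (m + 1), ((Nat.choose m j : ℕ) : ℚ_[p]) * t ^ j := by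
    rw [add_comm, h]
    exact Finset.sum_congr rfl fun j _ => by ring
  rw [h2, Finset.range_eq_Ico, Finset.sum_eq_sum_Ico_succ_bot (Nat.succ_pos m)]
  simp

private lemma key_norm_le (t : ℚ_[p])
    (ht : ‖t‖ < (p : ℝ) ^ (-(1 : ℝ) / ((p : ℝ) - 1))) (m : ℕ) :
    ‖(1 + t) ^ m - 1‖ ≤ ‖((m : ℕ) : ℚ_[p])‖ * ‖t‖ := by
  rcases Nat.eq_zero_or_pos m with rfl | hm
  · simp
  · obtain ⟨m', rfl⟩ : ∃ m', m = m' + 1 := ⟨m - 1, by omega⟩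
    rw [expand_pow_sub_one]
    apply padic_sum_norm_le _ _ _ (by positivity)
    intro j hj
    simp only [Finset.mem_Ico] at hj
    obtain ⟨j', rfl⟩ : ∃ j', j = j' + 1 := ⟨j - 1, by omega⟩
    exact term_norm_le t ht m' j'

private lemma key_pow_ne_one (t : ℚ_[p])
    (ht : ‖t‖ < (p : ℝ) ^ (-(1 : ℝ) / ((p : ℝ) - 1))) (ht0 : t ≠ 0)
    (m : ℕ) (hm : 1 ≤ m) : (1 + t) ^ m ≠ 1 := by
  obtain ⟨m', rfl⟩ : ∃ m', m = m' + 1 := ⟨m - 1, by omega⟩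
  have hsplit : (1 + t) ^ (m' + 1) - 1 - ((m' + 1 : ℕ) : ℚ_[p]) * t =
      ∑ j ∈ Finset.Ico 2 (m' + 1 + 1), ((Nat.choose (m' + 1) j : ℕ) : ℚ_[p]) * t ^ j := by
    rw [expand_pow_sub_one, Finset.sum_eq_sum_Ico_succ_bot (by omega : 1 < m' + 1 + 1)]
    simp [Nat.choose_one_right]
  have hM0 : (0:ℝ) < ‖((m' + 1 : ℕ) : ℚ_[p])‖ :=
    norm_pos_iff.mpr (Nat.cast_ne_zero.mpr (Nat.succ_ne_zero m'))
  have hT0 : (0:ℝ) < ‖t‖ := norm_pos_iff.mpr ht0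
  have hR : ‖∑ j ∈ Finset.Ico 2 (m' + 1 + 1), ((Nat.choose (m' + 1) j : ℕ) : ℚ_[p]) * t ^ j‖ <
      ‖((m' + 1 : ℕ) : ℚ_[p])‖ * ‖t‖ := by
    apply padic_sum_norm_lt _ _ _ (by positivity)
    intro j hj
    simp only [Finset.mem_Ico] at hj
    obtain ⟨j', rfl⟩ : ∃ j', j = j' + 1 := ⟨j - 1, by omega⟩
    exact term_norm_lt t ht ht0 m' j' (by omega)
  intro h
  rw [h] at hsplit
  have : ‖((m' + 1 : ℕ) : ℚ_[p]) * t‖ < ‖((m' + 1 : ℕ) : ℚ_[p])‖ * ‖t‖ := by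
    calc ‖((m' + 1 : ℕ) : ℚ_[p]) * t‖ = ‖1 - 1 - ((m' + 1 : ℕ) : ℚ_[p]) * t‖ := by
          rw [show (1:ℚ_[p]) - 1 - ((m' + 1 : ℕ) : ℚ_[p]) * t = -(((m' + 1 : ℕ) : ℚ_[p]) * t) by ring,
            norm_neg]
      _ < _ := by rw [hsplit]; exact hR
  rw [norm_mul] at this
  exact lt_irrefl _ this

private lemma tendsto_pow_p_pow (Q : ℚ_[p])
    (h : ‖Q - 1‖ < (p : ℝ) ^ (-(1 : ℝ) / ((p : ℝ) - 1))) :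
    Filter.Tendsto (fun N : ℕ => Q ^ (p ^ N)) Filter.atTop (nhds 1) := by
  have hp1 : (1 : ℝ) < (p : ℕ) := by exact_mod_cast hp.out.one_lt
  have hp0 : (0 : ℝ) < (p : ℕ) := lt_trans one_pos hp1
  rw [tendsto_iff_norm_sub_tendsto_zero]
  have hbound : ∀ N : ℕ, ‖Q ^ (p ^ N) - 1‖ ≤ ((p : ℝ)⁻¹) ^ N * ‖Q - 1‖ := by
    intro N
    have := key_norm_le (Q - 1) h (p ^ N)
    rw [add_sub_cancel] at this
    refine le_trans this (le_of_eq ?_)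
    congr 1
    rw [show (((p ^ N : ℕ)) : ℚ_[p]) = ((p : ℚ_[p])) ^ N by push_cast; ring,
      Padic.norm_p_pow]
    rw [zpow_neg, inv_pow, ← zpow_natCast (p : ℝ) N]
  have hg : Filter.Tendsto (fun N : ℕ => ((p : ℝ)⁻¹) ^ N * ‖Q - 1‖) Filter.atTop (nhds 0) := by
    have h1 : Filter.Tendsto (fun N : ℕ => ((p : ℝ)⁻¹) ^ N) Filter.atTop (nhds 0) :=
      tendsto_pow_atTop_nhds_zero_of_lt_one (by positivity) (by
        rw [inv_lt_one_iff₀]; right; exact hp1)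
    simpa using h1.mul_const ‖Q - 1‖
  exact squeeze_zero (fun N => norm_nonneg _) hbound hg


private noncomputable def gAux (p : ℕ) [Fact p.Prime] (Q : ℚ_[p]) (n x k : ℕ) (z : ℚ_[p]) : ℚ_[p] :=
  (1 / (1 - Q) ^ n) * ∑ i ∈ Finset.range (n + 1),
    (-1 : ℚ_[p]) ^ i * (Nat.choose n i : ℚ_[p]) * Q ^ (i * x) *
      ∏ j ∈ Finset.Icc 1 k, (∑ s ∈ Finset.range (i + j), z ^ s) / qnum Q (i + j)

private lemma gAux_continuous (Q : ℚ_[p]) (n x k : ℕ) : Continuous (gAux p Q n x k) := by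
  unfold gAux
  refine continuous_const.mul (continuous_finset_sum _ fun i _ => continuous_const.mul
    (continuous_finset_prod _ fun j _ => Continuous.div_const ?_ _))
  exact continuous_finset_sum _ fun s _ => continuous_pow s

private lemma gAux_one (Q : ℚ_[p]) (n x k : ℕ) :
    gAux p Q n x k 1 = (1 / (1 - Q) ^ n) * ∑ i ∈ Finset.range (n + 1),
      (-1 : ℚ_[p]) ^ i * (Nat.choose n i : ℚ_[p]) * Q ^ (i * x) *
        ∏ j ∈ Finset.Icc 1 k, ((i + j : ℕ) : ℚ_[p]) / qnum Q (i + j) := by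
  unfold gAux
  congr 1
  refine Finset.sum_congr rfl fun i _ => ?_
  congr 1
  refine Finset.prod_congr rfl fun j _ => ?_
  congr 1
  simp [Finset.sum_const]

private lemma qnum_pow_expand (Q : ℚ_[p]) (n y : ℕ) :
    (qnum Q y) ^ n = ∑ i ∈ Finset.range (n + 1),
      (1 / (1 - Q) ^ n) * ((-1 : ℚ_[p]) ^ i * (Nat.choose n i : ℚ_[p]) * Q ^ (y * i)) := by
  rw [qnum, div_pow]
  have hexp : (1 - Q ^ y) ^ n = ∑ i ∈ Finset.range (n + 1),
      (-1 : ℚ_[p]) ^ i * (Nat.choose n i : ℚ_[p]) * Q ^ (y * i) := by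
    calc (1 - Q ^ y) ^ n = (-(Q ^ y) + 1) ^ n := by ring_nf
      _ = ∑ i ∈ Finset.range (n + 1),
            (-(Q ^ y)) ^ i * 1 ^ (n - i) * (Nat.choose n i : ℚ_[p]) := add_pow _ _ _
      _ = _ := by
        refine Finset.sum_congr rfl fun i _ => ?_
        rw [neg_pow, one_pow, pow_mul]
        ring
  rw [hexp, Finset.sum_div]
  exact Finset.sum_congr rfl fun i _ => by ring

private lemma geom_factor (Q : ℚ_[p]) (hQ1 : Q ≠ 1) (hQm : ∀ m, 1 ≤ m → Q ^ m ≠ 1)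
    (P m : ℕ) (hP : 1 ≤ P) (hm : 1 ≤ m) :
    (1 / qnum Q P) * ∑ u ∈ Finset.range P, (Q ^ m) ^ u =
      (∑ s ∈ Finset.range m, (Q ^ P) ^ s) / qnum Q m := by
  rw [geom_sum_eq (hQm m hm) P, geom_sum_eq (hQm P hP) m, qnum, qnum]
  have h1 : (1 : ℚ_[p]) - Q ≠ 0 := sub_ne_zero.mpr (Ne.symm hQ1)
  have h2 : Q ^ m - 1 ≠ 0 := sub_ne_zero.mpr (hQm m hm)
  have h3 : Q ^ P - 1 ≠ 0 := sub_ne_zero.mpr (hQm P hP)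
  have h4 : (1 : ℚ_[p]) - Q ^ m ≠ 0 := fun h => h2 (by
    rw [show Q ^ m - 1 = -(1 - Q ^ m) by ring, h, neg_zero])
  have h5 : (1 : ℚ_[p]) - Q ^ P ≠ 0 := fun h => h3 (by
    rw [show Q ^ P - 1 = -(1 - Q ^ P) by ring, h, neg_zero])
  have hcomm : (Q ^ m) ^ P = (Q ^ P) ^ m := by rw [← pow_mul, ← pow_mul, mul_comm]
  rw [hcomm]
  field_simp
  ring

private lemma summand_expand (Q : ℚ_[p]) (n x k : ℕ) (v : Fin k → ℕ) :
    (qnum Q ((∑ l, v l) + x)) ^ n * Q ^ (∑ l, v l) * Q ^ (∑ l : Fin k, (k - 1 - (l : ℕ)) * v l)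
      = ∑ i ∈ Finset.range (n + 1),
          (1 / (1 - Q) ^ n * ((-1 : ℚ_[p]) ^ i * (Nat.choose n i : ℚ_[p]) * Q ^ (i * x))) *
            ∏ l : Fin k, (Q ^ (i + (k - (l : ℕ)))) ^ (v l) := by
  rw [qnum_pow_expand, Finset.sum_mul, Finset.sum_mul]
  refine Finset.sum_congr rfl fun i _ => ?_
  have hprod : ∏ l : Fin k, (Q ^ (i + (k - (l:ℕ)))) ^ (v l)
      = Q ^ (∑ l : Fin k, (i + (k - (l:ℕ))) * v l) := by
    rw [← Finset.prod_pow_eq_pow_sum]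
    exact Finset.prod_congr rfl fun l _ => (pow_mul Q _ _).symm
  have hExp : ((∑ l, v l) + x) * i + ((∑ l, v l) + ∑ l : Fin k, (k - 1 - (l:ℕ)) * v l)
      = i * x + ∑ l : Fin k, (i + (k - (l:ℕ))) * v l := by
    have hterm : ∀ l ∈ Finset.univ (α := Fin k), (i + (k - (l:ℕ))) * v l
        = i * v l + (v l + (k - 1 - (l:ℕ)) * v l) := by
      intro l _
      have hl : (l:ℕ) < k := l.isLt
      have hkl : k - (l:ℕ) = (k - 1 - (l:ℕ)) + 1 := by omega
      rw [hkl]; ring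
    rw [Finset.sum_congr rfl hterm, Finset.sum_add_distrib, Finset.sum_add_distrib,
      ← Finset.mul_sum]
    ring
  calc (1 / (1-Q)^n * ((-1:ℚ_[p])^i * (Nat.choose n i : ℚ_[p]) * Q^(((∑ l, v l)+x)*i)))
        * Q^(∑ l, v l) * Q^(∑ l : Fin k, (k-1-(l:ℕ)) * v l)
      = (1 / (1-Q)^n * ((-1:ℚ_[p])^i * (Nat.choose n i : ℚ_[p])))
        * Q^(((∑ l, v l)+x)*i + ((∑ l, v l) + ∑ l : Fin k, (k-1-(l:ℕ)) * v l)) := by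
        rw [pow_add, pow_add]; ring
    _ = _ := by rw [hExp, pow_add, hprod]; ring

private lemma prod_fin_reflect {M : Type*} [CommMonoid M] (k : ℕ) (G : ℕ → M) :
    ∏ l : Fin k, G (k - (l : ℕ)) = ∏ j ∈ Finset.Icc 1 k, G j := by
  rw [Fin.prod_univ_eq_prod_range (fun l => G (k - l)) k]
  have h1 : ∏ l ∈ Finset.range k, G (k - l) = ∏ j ∈ Finset.range k, G (j + 1) := by
    have := Finset.prod_range_reflect (fun j => G (j + 1)) k
    calc ∏ l ∈ Finset.range k, G (k - l)
        = ∏ l ∈ Finset.range k, G (k - 1 - l + 1) := by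
          refine Finset.prod_congr rfl fun l hl => ?_
          have := Finset.mem_range.mp hl
          congr 1
          omega
      _ = _ := this
  rw [h1, ← Finset.Ico_add_one_right_eq_Icc, Finset.prod_Ico_eq_prod_range]
  exact Finset.prod_congr rfl fun j _ => by rw [add_comm]

private lemma main_step (Q : ℚ_[p]) (hQ1 : Q ≠ 1) (hQm : ∀ m, 1 ≤ m → Q ^ m ≠ 1)
    (k : ℕ) (n x P : ℕ) (hP : 1 ≤ P) :
    (1 / qnum Q P) ^ k *
        ∑ v ∈ Fintype.piFinset (fun _ : Fin k => Finset.range P),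
          (qnum Q ((∑ l, v l) + x)) ^ n * Q ^ (∑ l, v l) *
            Q ^ (∑ l : Fin k, (k - 1 - (l : ℕ)) * v l)
      = gAux p Q n x k (Q ^ P) := by
  rw [Finset.sum_congr rfl fun v _ => summand_expand Q n x k v, Finset.sum_comm,
    Finset.mul_sum, gAux, Finset.mul_sum]
  refine Finset.sum_congr rfl fun i _ => ?_
  rw [← Finset.mul_sum, ← Finset.prod_univ_sum]
  have hpow : (1 / qnum Q P) ^ k = ∏ _l : Fin k, (1 / qnum Q P) := by
    simp [Finset.prod_const]
  rw [hpow]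
  calc (∏ _l : Fin k, (1 / qnum Q P)) *
        ((1 / (1 - Q) ^ n * ((-1 : ℚ_[p]) ^ i * (Nat.choose n i : ℚ_[p]) * Q ^ (i * x))) *
          ∏ l : Fin k, ∑ u ∈ Finset.range P, ((Q ^ (i + (k - (l : ℕ)))) ^ u))
      = (1 / (1 - Q) ^ n * ((-1 : ℚ_[p]) ^ i * (Nat.choose n i : ℚ_[p]) * Q ^ (i * x))) *
          ∏ l : Fin k, ((1 / qnum Q P) * ∑ u ∈ Finset.range P, ((Q ^ (i + (k - (l : ℕ)))) ^ u)) := by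
        rw [Finset.prod_mul_distrib]; ring
    _ = (1 / (1 - Q) ^ n * ((-1 : ℚ_[p]) ^ i * (Nat.choose n i : ℚ_[p]) * Q ^ (i * x))) *
          ∏ l : Fin k, ((∑ s ∈ Finset.range (i + (k - (l : ℕ))), (Q ^ P) ^ s) /
            qnum Q (i + (k - (l : ℕ)))) := by
        congr 1
        refine Finset.prod_congr rfl fun l _ => ?_
        exact geom_factor Q hQ1 hQm P (i + (k - (l : ℕ))) hP (by have := l.isLt; omega)
    _ = _ := by
        rw [prod_fin_reflect k
          (fun j => (∑ s ∈ Finset.range (i + j), (Q ^ P) ^ s) / qnum Q (i + j))]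
        ring

/-- **Evaluation (25) ⇒ (26)**: the k-fold multivariate q-Volkenborn Riemann sums
defining the higher-order q-Bernoulli polynomial `β^{(k)}_{n,q}(x)` converge in `ℚ_p`:
`lim_N (1/[p^N]_q)^k Σ_{x_1,…,x_k < p^N} [x_1+⋯+x_k+x]_q^n q^{x_1+⋯+x_k} q^{Σ_l (k-l)x_l}
 = (1/(1-q)^n) Σ_{i=0}^n (-1)^i C(n,i) q^{ix} ∏_{j=1}^k (i+j)/[i+j]_q`
(here the variable `x_l`, `1 ≤ l ≤ k`, is indexed by `l : Fin k` with weight `k-1-l`). -/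
theorem multivariate_qVolkenborn_qBernoulliPoly
    (p : ℕ) [Fact p.Prime] (q : ℤ_[p]) (hq1 : q ≠ 1)
    (hq : ‖q - 1‖ < (p : ℝ) ^ (-(1 : ℝ) / ((p : ℝ) - 1)))
    (k : ℕ) (hk : 1 ≤ k) (n x : ℕ) :
    Filter.Tendsto
      (fun N : ℕ => (1 / qnum (q : ℚ_[p]) (p ^ N)) ^ k *
        ∑ v ∈ Fintype.piFinset (fun _ : Fin k => Finset.range (p ^ N)),
          (qnum (q : ℚ_[p]) ((∑ l, v l) + x)) ^ n * (q : ℚ_[p]) ^ (∑ l, v l) *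
            (q : ℚ_[p]) ^ (∑ l : Fin k, (k - 1 - (l : ℕ)) * v l))
      Filter.atTop
      (nhds ((1 / (1 - (q : ℚ_[p])) ^ n) * ∑ i ∈ Finset.range (n + 1),
        (-1 : ℚ_[p]) ^ i * (Nat.choose n i : ℚ_[p]) * (q : ℚ_[p]) ^ (i * x) *
          ∏ j ∈ Finset.Icc 1 k, ((i + j : ℕ) : ℚ_[p]) / qnum (q : ℚ_[p]) (i + j))) := by
  have hQ1 : (q : ℚ_[p]) ≠ 1 := fun h => hq1 (Subtype.ext (by simpa using h))
  have ht : ‖(q : ℚ_[p]) - 1‖ < (p : ℝ) ^ (-(1 : ℝ) / ((p : ℝ) - 1)) := by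
    have : ‖(q : ℚ_[p]) - 1‖ = ‖q - 1‖ := by
      rw [PadicInt.norm_def]; push_cast; ring_nf
    rwa [this]
  have ht0 : (q : ℚ_[p]) - 1 ≠ 0 := sub_ne_zero.mpr hQ1
  have hQm : ∀ m, 1 ≤ m → (q : ℚ_[p]) ^ m ≠ 1 := by
    intro m hm
    have := key_pow_ne_one ((q : ℚ_[p]) - 1) ht ht0 m hm
    rwa [add_sub_cancel] at this
  have hfun : (fun N : ℕ => (1 / qnum (q : ℚ_[p]) (p ^ N)) ^ k *
        ∑ v ∈ Fintype.piFinset (fun _ : Fin k => Finset.range (p ^ N)),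
          (qnum (q : ℚ_[p]) ((∑ l, v l) + x)) ^ n * (q : ℚ_[p]) ^ (∑ l, v l) *
            (q : ℚ_[p]) ^ (∑ l : Fin k, (k - 1 - (l : ℕ)) * v l))
      = fun N : ℕ => gAux p (q : ℚ_[p]) n x k ((q : ℚ_[p]) ^ (p ^ N)) :=
    funext fun N => main_step (q : ℚ_[p]) hQ1 hQm k n x (p ^ N)
      (Nat.one_le_pow _ _ (Fact.out : p.Prime).pos)
  rw [hfun, show ((1 / (1 - (q : ℚ_[p])) ^ n) * ∑ i ∈ Finset.range (n + 1),
        (-1 : ℚ_[p]) ^ i * (Nat.choose n i : ℚ_[p]) * (q : ℚ_[p]) ^ (i * x) *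
          ∏ j ∈ Finset.Icc 1 k, ((i + j : ℕ) : ℚ_[p]) / qnum (q : ℚ_[p]) (i + j))
      = gAux p (q : ℚ_[p]) n x k 1 from (gAux_one (q : ℚ_[p]) n x k).symm]
  exact ((gAux_continuous (q : ℚ_[p]) n x k).tendsto 1).comp (tendsto_pow_p_pow (q : ℚ_[p]) ht)
end
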